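/- arXiv:math/0204340 — 5 statements merged into one kernel-verified Lean document; each statement's English description precedes it below -/
import Mathlib

section
/- Let H' and H be Hilbert spaces, l : H' → H a continuous linear Fredholm map, and c : H' → H a compact map (i.e., c maps bounded sets into relatively compact sets). Then the restriction of f = l + c to any closed and bounded subset A' ⊆ H' is a proper map. -/
open Bornology Metric Topology Filter

/-- The restriction of a compact perturbation `f = l + c` of a continuous linear
Fredholm map `l` between Hilbert spaces to a closed bounded set `A'` is proper. -/
theorem restriction_of_fredholm_map_to_closed_bounded_is_proper
    {H' H : Type*}
    [NormedAddCommGroup H'] [InnerProductSpace ℝ H'] [CompleteSpace H']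
    [NormedAddCommGroup H] [InnerProductSpace ℝ H] [CompleteSpace H]
    (l : H' →L[ℝ] H)
    (hker : FiniteDimensional ℝ (LinearMap.ker (l : H' →ₗ[ℝ] H)))
    (hrange : IsClosed (LinearMap.range (l : H' →ₗ[ℝ] H) : Set H))
    (hcoker : FiniteDimensional ℝ (H ⧸ LinearMap.range (l : H' →ₗ[ℝ] H)))
    (c : H' → H) (hc : Continuous c)
    (hcpt : ∀ s : Set H', IsBounded s → IsCompact (closure (c '' s)))
    (A' : Set H') (hA : IsClosed A') (hAb : IsBounded A') :
    IsProperMap (fun a : A' => l a + c a) := by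
  classical
  set K : Submodule ℝ H' := LinearMap.ker (l : H' →ₗ[ℝ] H) with hK
  set R : Submodule ℝ H := LinearMap.range (l : H' →ₗ[ℝ] H) with hR
  haveI : CompleteSpace K := FiniteDimensional.complete ℝ K
  haveI : CompleteSpace R := hrange.completeSpace_coe
  -- `φ : Kᗮ →L[ℝ] R` is the restriction of `l`, a continuous linear bijection
  set φ : (Kᗮ : Submodule ℝ H') →L[ℝ] R :=
    (l.comp Kᗮ.subtypeL).codRestrict R (fun x => LinearMap.mem_range_self _ _) with hφ
  have hφval : ∀ x : Kᗮ, (φ x : H) = l x := fun x => rfl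
  have hinj : LinearMap.ker (φ : (Kᗮ : Submodule ℝ H') →ₗ[ℝ] R) = ⊥ := by
    rw [LinearMap.ker_eq_bot']
    intro m hm
    have h1 : (m : H') ∈ K := by
      have : l (m : H') = 0 := congrArg Subtype.val hm
      simpa [hK, LinearMap.mem_ker] using this
    have h2 : (m : H') ∈ Kᗮ := m.2
    exact Subtype.ext (Submodule.disjoint_def.mp K.orthogonal_disjoint _ h1 h2)
  have hsurj : LinearMap.range (φ : (Kᗮ : Submodule ℝ H') →ₗ[ℝ] R) = ⊤ := by
    rw [LinearMap.range_eq_top]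
    rintro ⟨w, hw⟩
    obtain ⟨x, hx⟩ := hw
    refine ⟨Submodule.orthogonalProjection Kᗮ x, ?_⟩
    apply Subtype.ext
    have hdecomp : (Submodule.orthogonalProjection K x : H') + (Submodule.orthogonalProjection Kᗮ x : H') = x := by
      exact K.starProjection_add_starProjection_orthogonal x
    have hker0 : l ((Submodule.orthogonalProjection K x : H')) = 0 :=
      (Submodule.orthogonalProjection K x).2
    calc (φ (Submodule.orthogonalProjection Kᗮ x) : H) = l (Submodule.orthogonalProjection Kᗮ x : H') := rfl
      _ = l ((Submodule.orthogonalProjection K x : H')) + l ((Submodule.orthogonalProjection Kᗮ x : H')) := by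
          rw [hker0, zero_add]
      _ = l x := by rw [← map_add, hdecomp]
      _ = w := hx
  -- the inverse of `φ` is continuous by the open mapping theorem
  set e : (Kᗮ : Submodule ℝ H') ≃L[ℝ] R := ContinuousLinearEquiv.ofBijective φ hinj hsurj with he
  rw [isProperMap_iff_ultrafilter]
  have hcont : Continuous fun a : A' => l a + c a :=
    ((l.continuous.comp continuous_subtype_val).add (hc.comp continuous_subtype_val))
  refine ⟨hcont, ?_⟩
  intro 𝒰 y hy
  -- `c a` lives in a compact set, so converges along the ultrafilter to some `z`
  have hCc : IsCompact (closure (c '' A')) := hcpt A' hAb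
  have hmemc : ∀ᶠ a : A' in 𝒰, c a ∈ closure (c '' A') :=
    Filter.Eventually.of_forall fun a => subset_closure ⟨a, a.2, rfl⟩
  obtain ⟨z, hzmem, hz⟩ := hCc.ultrafilter_le_nhds (𝒰.map fun a : A' => c a)
    (by rwa [Ultrafilter.coe_map, Filter.le_principal_iff, Filter.mem_map])
  have hz' : Filter.Tendsto (fun a : A' => c a) 𝒰 (𝓝 z) := hz
  -- hence `l a` converges to `y - z`
  have hl : Filter.Tendsto (fun a : A' => l a) 𝒰 (𝓝 (y - z)) := by
    have := hy.sub hz'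
    simpa using this
  -- `y - z` is in the range of `l`
  have hyz : y - z ∈ R := by
    refine hrange.mem_of_tendsto hl (Filter.Eventually.of_forall fun a => ?_)
    exact LinearMap.mem_range_self _ _
  -- the projection to `Kᗮ` converges, via the continuous inverse `e.symm`
  have hlsub : Filter.Tendsto (fun a : A' => (⟨l a, LinearMap.mem_range_self _ _⟩ : R)) 𝒰
      (𝓝 (⟨y - z, hyz⟩ : R)) := by
    rw [tendsto_subtype_rng]
    exact hl
  have hφa : ∀ a : A', (⟨l a.1, LinearMap.mem_range_self _ _⟩ : R) =
      φ (Submodule.orthogonalProjection Kᗮ a.1) := by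
    intro a
    apply Subtype.ext
    have hdecomp : (Submodule.orthogonalProjection K a.1 : H') + (Submodule.orthogonalProjection Kᗮ a.1 : H') = a.1 := by
      exact K.starProjection_add_starProjection_orthogonal a.1
    have hker0 : l ((Submodule.orthogonalProjection K a.1 : H')) = 0 := (Submodule.orthogonalProjection K a.1).2
    calc l a.1 = l ((Submodule.orthogonalProjection K a.1 : H') + (Submodule.orthogonalProjection Kᗮ a.1 : H')) := by
          rw [hdecomp]
      _ = l ((Submodule.orthogonalProjection Kᗮ a.1 : H')) := by rw [map_add, hker0, zero_add]
      _ = (φ (Submodule.orthogonalProjection Kᗮ a.1) : H) := rfl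
  have hproj2 : Filter.Tendsto (fun a : A' => Submodule.orthogonalProjection Kᗮ a.1) 𝒰
      (𝓝 (e.symm ⟨y - z, hyz⟩)) := by
    have h1 : Filter.Tendsto (fun a : A' => e.symm (⟨l a.1, LinearMap.mem_range_self _ _⟩ : R)) 𝒰
        (𝓝 (e.symm ⟨y - z, hyz⟩)) := (e.symm.continuous.tendsto _).comp hlsub
    convert h1 using 2 with a
    rw [hφa a]
    exact (e.symm_apply_apply _).symm
  -- the projection to `K` lives in a compact set (finite dimensions), so converges
  haveI : ProperSpace K := FiniteDimensional.proper ℝ K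
  have hbdd : IsBounded ((fun a : A' => Submodule.orthogonalProjection K a.1) '' Set.univ) := by
    have : IsBounded ((Submodule.orthogonalProjection K) '' A') :=
      (LipschitzWith.isBounded_image (Submodule.orthogonalProjection K).lipschitz hAb)
    refine this.subset ?_
    rintro _ ⟨a, -, rfl⟩
    exact ⟨a.1, a.2, rfl⟩
  have hCk : IsCompact (closure ((fun a : A' => Submodule.orthogonalProjection K a.1) '' Set.univ)) :=
    hbdd.isCompact_closure
  obtain ⟨k, hkmem, hk⟩ := hCk.ultrafilter_le_nhds
    (𝒰.map fun a : A' => Submodule.orthogonalProjection K a.1)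
    (by
      rw [Ultrafilter.coe_map, Filter.le_principal_iff, Filter.mem_map]
      exact Filter.Eventually.of_forall fun a => subset_closure ⟨a, trivial, rfl⟩)
  have hk' : Filter.Tendsto (fun a : A' => Submodule.orthogonalProjection K a.1) 𝒰 (𝓝 k) := hk
  -- so `a` itself converges to `x := k + e.symm ⟨y - z, _⟩`
  set x : H' := (k : H') + (e.symm ⟨y - z, hyz⟩ : H') with hx
  have hax : Filter.Tendsto (fun a : A' => a.1) 𝒰 (𝓝 x) := by
    have := (continuous_subtype_val.tendsto k |>.comp hk').add
      (continuous_subtype_val.tendsto _ |>.comp hproj2)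
    refine this.congr fun a => ?_
    exact K.starProjection_add_starProjection_orthogonal a.1
  have hxA : x ∈ A' := hA.mem_of_tendsto hax (Filter.Eventually.of_forall fun a => a.2)
  refine ⟨⟨x, hxA⟩, ?_, ?_⟩
  · have h2 : Filter.Tendsto (fun a : A' => l a + c a) 𝒰 (𝓝 (l x + c x)) :=
      ((l.continuous.tendsto x).comp hax).add ((hc.tendsto x).comp hax)
    exact (tendsto_nhds_unique h2 hy)
  · rw [← Filter.tendsto_id']
    rw [tendsto_subtype_rng]
    exact hax
end

section
/- Let H' and H be Hilbert spaces, l : H' → H a continuous linear Fredholm map, and c : H' → H a compact map. If f = l + c has the property that preimages of bounded sets in H are bounded in H', then f is a proper map. -/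
open Bornology Metric Filter Topology

/-- A compact perturbation `f = l + c` of a continuous linear Fredholm map `l`
between Hilbert spaces, with the property that preimages of bounded sets are
bounded, is a proper map. -/
theorem fredholm_map_with_bounded_preimages_is_proper
    {H' H : Type*}
    [NormedAddCommGroup H'] [InnerProductSpace ℝ H'] [CompleteSpace H']
    [NormedAddCommGroup H] [InnerProductSpace ℝ H] [CompleteSpace H]
    (l : H' →L[ℝ] H)
    (hker : FiniteDimensional ℝ (LinearMap.ker (l : H' →ₗ[ℝ] H)))
    (hrange : IsClosed (LinearMap.range (l : H' →ₗ[ℝ] H) : Set H))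
    (hcoker : FiniteDimensional ℝ (H ⧸ LinearMap.range (l : H' →ₗ[ℝ] H)))
    (c : H' → H) (hc : Continuous c)
    (hcpt : ∀ s : Set H', IsBounded s → IsCompact (closure (c '' s)))
    (hbdd : ∀ s : Set H, IsBounded s → IsBounded ((fun x => l x + c x) ⁻¹' s)) :
    IsProperMap (fun x => l x + c x) := by
  classical
  set N := LinearMap.ker (l : H' →ₗ[ℝ] H) with hN
  set V := Nᗮ with hV
  haveI : CompleteSpace N := FiniteDimensional.complete ℝ N
  haveI : CompleteSpace V := N.isClosed_orthogonal.completeSpace_coe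
  haveI : CompleteSpace (LinearMap.range (l : H' →ₗ[ℝ] H)) := hrange.completeSpace_coe
  haveI : ProperSpace N := FiniteDimensional.proper ℝ N
  set P := N.orthogonalProjectionOnto with hP
  -- the restriction of `l` to `V`, corestricted to its (closed) range
  set e : V →L[ℝ] LinearMap.range (l : H' →ₗ[ℝ] H) :=
    (l.comp (Submodule.subtypeL V)).codRestrict (LinearMap.range (l : H' →ₗ[ℝ] H))
      (fun v => ⟨v, rfl⟩) with he
  have he_apply : ∀ v : V, (e v : H) = l v := fun v => rfl
  have einj : LinearMap.ker (e : V →ₗ[ℝ] LinearMap.range (l : H' →ₗ[ℝ] H)) = ⊥ := by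
    rw [LinearMap.ker_eq_bot]
    intro v w hvw
    have h1 : l v = l w := by
      have := congrArg Subtype.val hvw
      simpa [he_apply] using this
    have h2 : ((v : H') - (w : H')) ∈ N := by
      simp only [hN, LinearMap.mem_ker, map_sub]
      simp [h1]
    have h3 : ((v : H') - (w : H')) ∈ V := sub_mem v.2 w.2
    have h4 : ((v : H') - (w : H')) = 0 :=
      Submodule.disjoint_def.mp N.orthogonal_disjoint _ h2 h3
    exact Subtype.ext (sub_eq_zero.mp h4)
  have esurj : LinearMap.range (e : V →ₗ[ℝ] LinearMap.range (l : H' →ₗ[ℝ] H)) = ⊤ := by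
    rw [LinearMap.range_eq_top]
    rintro ⟨y, x, rfl⟩
    refine ⟨⟨x - P x, Submodule.sub_starProjection_mem_orthogonal (K := N) x⟩, ?_⟩
    apply Subtype.ext
    have hPx : l (P x) = 0 := (P x).2
    simp [he_apply, map_sub, hPx]
  set E := ContinuousLinearEquiv.ofBijective e einj esurj with hE
  -- reduce to compactness of preimages of compact sets
  have hfc : Continuous (fun x => l x + c x) := l.continuous.add hc
  rw [isProperMap_iff_isCompact_preimage]
  refine ⟨hfc, fun K hK => ?_⟩
  set S := (fun x => l x + c x) ⁻¹' K with hS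
  have hSb : IsBounded S := hbdd K hK.isBounded
  have hScl : IsClosed S := hK.isClosed.preimage hfc
  rw [isCompact_iff_isSeqCompact]
  intro x hx
  -- extract a subsequence along which `c ∘ x` converges
  obtain ⟨w, -, φ, hφ, hw⟩ := (hcpt S hSb).tendsto_subseq
    (x := fun n => c (x n)) (fun n => subset_closure ⟨x n, hx n, rfl⟩)
  -- extract a further subsequence along which `f ∘ x` converges
  obtain ⟨z, hzK, ψ, hψ, hz⟩ := hK.tendsto_subseq
    (x := fun n => l (x (φ n)) + c (x (φ n))) (fun n => hx (φ n))
  set y := fun n => x (φ (ψ n)) with hy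
  have hcy : Tendsto (fun n => c (y n)) atTop (𝓝 w) := hw.comp hψ.tendsto_atTop
  have hly : Tendsto (fun n => l (y n)) atTop (𝓝 (z - w)) := by
    have : (fun n => l (y n)) = fun n => (l (y n) + c (y n)) - c (y n) := by
      funext n; rw [add_sub_cancel_right]
    rw [this]
    exact hz.sub hcy
  -- the `V`-components of `y n`
  set v : ℕ → V := fun n => ⟨y n - P (y n), Submodule.sub_starProjection_mem_orthogonal (K := N) (y n)⟩
    with hv
  have hlv : ∀ n, l (v n) = l (y n) := by
    intro n
    have hPy : l (P (y n)) = 0 := (P (y n)).2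
    simp [hv, map_sub, hPy]
  have hzw : z - w ∈ LinearMap.range (l : H' →ₗ[ℝ] H) := by
    refine hrange.mem_of_tendsto hly (Eventually.of_forall fun n => ?_)
    exact ⟨y n, rfl⟩
  have hev : Tendsto (fun n => e (v n)) atTop (𝓝 ⟨z - w, hzw⟩) := by
    rw [IsEmbedding.subtypeVal.tendsto_nhds_iff]
    have : (Subtype.val ∘ fun n => e (v n)) = fun n => l (y n) := by
      funext n; simp [he_apply, hlv n]
    rw [this]
    exact hly
  have hvconv : Tendsto v atTop (𝓝 (E.symm ⟨z - w, hzw⟩)) := by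
    have : v = fun n => E.symm (e (v n)) := by
      funext n
      exact (E.symm_apply_apply (v n)).symm
    rw [this]
    exact (E.symm.continuous.tendsto _).comp hev
  -- the `N`-components of `y n` are bounded, extract convergent subsequence
  obtain ⟨R, hR⟩ := hSb.subset_closedBall 0
  have hPyb : ∀ n, P (y n) ∈ closedBall (0 : N) (‖P‖ * max R 0) := by
    intro n
    rw [mem_closedBall, dist_zero_right]
    calc ‖P (y n)‖ ≤ ‖P‖ * ‖y n‖ := P.le_opNorm (y n)
      _ ≤ ‖P‖ * max R 0 := by
          apply mul_le_mul_of_nonneg_left _ (norm_nonneg P)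
          have := hR (hx (φ (ψ n)))
          rw [mem_closedBall, dist_zero_right] at this
          exact le_trans this (le_max_left _ _)
  obtain ⟨k, -, χ, hχ, hk⟩ := tendsto_subseq_of_bounded
    isBounded_closedBall (x := fun n => P (y n)) hPyb
  -- assemble the limit
  have hyt : Tendsto (fun n => y (χ n)) atTop
      (𝓝 ((k : H') + (E.symm ⟨z - w, hzw⟩ : H'))) := by
    have h1 : Tendsto (fun n => (P (y (χ n)) : H')) atTop (𝓝 (k : H')) :=
      (continuous_subtype_val.tendsto _).comp hk
    have h2 : Tendsto (fun n => (v (χ n) : H')) atTop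
        (𝓝 (E.symm ⟨z - w, hzw⟩ : H')) :=
      ((continuous_subtype_val.tendsto _).comp hvconv).comp hχ.tendsto_atTop
    have h3 := h1.add h2
    have heq : (fun n => (P (y (χ n)) : H') + (v (χ n) : H')) = fun n => y (χ n) := by
      funext n; simp [hv]
    rwa [heq] at h3
  refine ⟨(k : H') + (E.symm ⟨z - w, hzw⟩ : H'),
    hScl.mem_of_tendsto hyt (Eventually.of_forall fun n => hx _),
    φ ∘ ψ ∘ χ, (hφ.comp hψ).comp hχ, hyt⟩
end

section
/- There exists a proper continuous map f : H → H on an infinite-dimensional separable Hilbert space H of the form f = id + c with c compact, such that f does not satisfy the boundedness condition: the preimage under f of the closed unit ball is unbounded. -/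
open Bornology Metric Filter Topology

/-- On any infinite-dimensional separable Hilbert space there is a proper
continuous map `f = id + c` with `c` compact such that the preimage of the
closed unit ball under `f` is unbounded. -/
theorem exists_proper_compact_perturbation_of_id_with_unbounded_preimage
    {H : Type*}
    [NormedAddCommGroup H] [InnerProductSpace ℝ H] [CompleteSpace H]
    [TopologicalSpace.SeparableSpace H]
    (hinf : ¬ FiniteDimensional ℝ H) :
    ∃ c : H → H, Continuous c ∧
      (∀ s : Set H, IsBounded s → IsCompact (closure (c '' s))) ∧
      IsProperMap (fun x => x + c x) ∧
      ¬ IsBounded ((fun x => x + c x) ⁻¹' Metric.closedBall (0 : H) 1) := by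
  classical
  -- ## An orthonormal sequence
  obtain ⟨w, b, hb⟩ := exists_hilbertBasis ℝ H
  have hw_on : Orthonormal ℝ ((↑) : w → H) := hb ▸ b.orthonormal
  have hw_inf : w.Infinite := by
    by_contra hfin
    rw [Set.not_infinite] at hfin
    apply hinf
    have hdense := b.dense_span
    rw [hb, Subtype.range_coe] at hdense
    haveI : FiniteDimensional ℝ (Submodule.span ℝ w) :=
      FiniteDimensional.span_of_finite ℝ hfin
    have hclosed : IsClosed ((Submodule.span ℝ w : Submodule ℝ H) : Set H) :=
      Submodule.closed_of_finiteDimensional _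
    rw [hclosed.submodule_topologicalClosure_eq] at hdense
    exact Module.finite_def.mpr (hdense ▸ Submodule.fg_def.mpr ⟨w, hfin, rfl⟩)
  set e : ℕ → H := fun n => ((Set.Infinite.natEmbedding w hw_inf) n : H) with he_def
  have he : Orthonormal ℝ e := hw_on.comp _ (Set.Infinite.natEmbedding w hw_inf).injective
  have henorm : ∀ n, ‖e n‖ = 1 := he.1
  have heinner : ∀ {n m}, n ≠ m → (inner ℝ (e n) (e m) : ℝ) = 0 := fun h => he.2 h
  set a : ℕ → H := fun n => ((n : ℝ) + 1) • e n with ha_def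
  set φf : H → ℝ := fun y => max (1 - 2 * ‖y‖) 0 with hφ_def
  set ψ : ℕ → H → H := fun n x => φf (x - a n) • ((-(n : ℝ)) • e n) with hψ_def
  set c : H → H := fun x => ∑' n, ψ n x with hc_def
  have hanorm : ∀ n, ‖a n‖ = (n : ℝ) + 1 := by
    intro n
    rw [ha_def]
    simp only [norm_smul, henorm n, mul_one, Real.norm_eq_abs]
    rw [abs_of_nonneg (by positivity)]
  have hφ_nonneg : ∀ y, 0 ≤ φf y := fun y => le_max_right _ _
  have hφ_le_one : ∀ y, φf y ≤ 1 := fun y => by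
    rw [hφ_def]
    simp only [max_le_iff]
    constructor
    · nlinarith [norm_nonneg y]
    · norm_num
  have hφ_zero : ∀ y : H, (1:ℝ)/2 ≤ ‖y‖ → φf y = 0 := by
    intro y hy
    rw [hφ_def]
    simp only [max_eq_right_iff]
    linarith
  have hφ_cont : Continuous φf := by
    rw [hφ_def]
    exact (continuous_const.sub (continuous_const.mul continuous_norm)).max continuous_const
  have hψ_zero : ∀ n (x : H), ¬ (‖x - a n‖ < 1/2) → ψ n x = 0 := by
    intro n x hx
    rw [hψ_def]
    simp only
    rw [hφ_zero _ (le_of_not_gt hx), zero_smul]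
  have hfar : ∀ (n : ℕ) (x : H), ‖x‖ ≤ (n : ℝ) + 1/2 → ψ n x = 0 := by
    intro n x hx
    apply hψ_zero
    push_neg
    have := norm_sub_norm_le (a n) x
    rw [hanorm n, norm_sub_rev] at this
    linarith
  have hdisj : ∀ (x : H) n m, ‖x - a n‖ < 1/2 → ‖x - a m‖ < 1/2 → n = m := by
    intro x n m hn hm
    by_contra hnm
    have h2 : ‖a n - a m‖ ^ 2 = ((n:ℝ)+1)^2 + ((m:ℝ)+1)^2 := by
      rw [@norm_sub_sq_real, hanorm, hanorm, ha_def]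
      simp only [inner_smul_left, inner_smul_right, heinner hnm]
      ring
    have h3 : (1:ℝ) ≤ ‖a n - a m‖ ^ 2 := by nlinarith [Nat.cast_nonneg (α := ℝ) n, Nat.cast_nonneg (α := ℝ) m]
    have h4 : ‖a n - a m‖ ≤ ‖x - a n‖ + ‖x - a m‖ := by
      have := norm_sub_le (a n - x) (a m - x)
      simpa [norm_sub_rev, sub_sub_sub_cancel_right] using norm_sub_le_norm_sub_add_norm_sub (a n) x (a m)
    nlinarith [norm_nonneg (a n - a m)]
  have hceq : ∀ (x : H) n, ‖x - a n‖ < 1/2 → c x = ψ n x := by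
    intro x n hx
    rw [hc_def]
    exact tsum_eq_single n (fun m hm => hψ_zero m x (fun h => hm (hdisj x m n h hx)))
  have hceq0 : ∀ x : H, (∀ n, ¬ (‖x - a n‖ < 1/2)) → c x = 0 := by
    intro x hx
    rw [hc_def]
    simp only
    rw [tsum_eq_single 0 (fun m _ => hψ_zero m x (hx m)), hψ_zero 0 x (hx 0)]
  -- continuity
  have hsum : ∀ (R : ℝ) (x : H), ‖x‖ < R → c x = ∑ n ∈ Finset.range ⌈R⌉₊, ψ n x := by
    intro R x hx
    rw [hc_def]
    apply tsum_eq_sum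
    intro n hn
    rw [Finset.mem_range, not_lt] at hn
    apply hfar
    have : R ≤ ⌈R⌉₊ := Nat.le_ceil R
    have : (⌈R⌉₊ : ℝ) ≤ n := Nat.cast_le.mpr hn
    linarith
  have hψcont : ∀ n : ℕ, Continuous (ψ n) := by
    intro n
    rw [hψ_def]
    exact (hφ_cont.comp (continuous_id.sub continuous_const)).smul continuous_const
  have hcont : Continuous c := by
    rw [continuous_iff_continuousAt]
    intro x₀
    have hx₀ : x₀ ∈ ball (0 : H) (‖x₀‖ + 1) := by
      simp [mem_ball, dist_zero_right]
    have : ContinuousAt (fun x => ∑ n ∈ Finset.range ⌈‖x₀‖ + 1⌉₊, ψ n x) x₀ :=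
      (continuous_finset_sum _ (fun n _ => hψcont n)).continuousAt
    apply this.congr
    apply Filter.eventuallyEq_of_mem (isOpen_ball.mem_nhds hx₀)
    intro x hx
    rw [mem_ball, dist_zero_right] at hx
    exact (hsum _ x hx).symm
  -- compactness of images of bounded sets
  have hcpt : ∀ s : Set H, IsBounded s → IsCompact (closure (c '' s)) := by
    intro s hs
    obtain ⟨R, hR0, hsR⟩ : ∃ R : ℝ, 0 ≤ R ∧ s ⊆ closedBall 0 R := by
      obtain ⟨R, hsR⟩ := hs.subset_closedBall 0
      exact ⟨max R 0, le_max_right _ _, hsR.trans (closedBall_subset_closedBall (le_max_left _ _))⟩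
    set S : Submodule ℝ H := Submodule.span ℝ (e '' Set.Iio ⌈R⌉₊) with hS_def
    haveI : FiniteDimensional ℝ S :=
      FiniteDimensional.span_of_finite ℝ ((Set.finite_Iio _).image e)
    have hmem : ∀ x ∈ s, c x ∈ S ∧ ‖c x‖ ≤ R := by
      intro x hxs
      have hxR : ‖x‖ ≤ R := by
        have := hsR hxs; rwa [mem_closedBall, dist_zero_right] at this
      by_cases hex : ∃ n, ‖x - a n‖ < 1/2
      · obtain ⟨n, hn⟩ := hex
        have hcx := hceq x n hn
        have hnR : (n : ℝ) < R := by
          have h1 := norm_sub_norm_le (a n) x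
          rw [hanorm n, norm_sub_rev] at h1
          linarith
        constructor
        · rw [hcx, hψ_def]
          exact S.smul_mem _ (S.smul_mem _ (Submodule.subset_span
            ⟨n, by simpa using (Nat.lt_ceil.mpr hnR), rfl⟩))
        · rw [hcx, hψ_def]
          simp only [norm_smul, Real.norm_eq_abs, henorm n, mul_one, abs_neg, Nat.abs_cast]
          calc |φf (x - a n)| * (n : ℝ) ≤ 1 * (n:ℝ) := by
                apply mul_le_mul_of_nonneg_right _ (Nat.cast_nonneg n)
                rw [abs_of_nonneg (hφ_nonneg _)]; exact hφ_le_one _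
            _ ≤ R := by linarith
      · push_neg at hex
        rw [hceq0 x (fun n => not_lt.mpr (hex n))]
        exact ⟨S.zero_mem, by simpa using hR0⟩
    have hKcpt : IsCompact (((↑) : S → H) '' (closedBall (0 : S) R)) :=
      (isCompact_closedBall _ _).image continuous_subtype_val
    have hsub : c '' s ⊆ ((↑) : S → H) '' (closedBall (0 : S) R) := by
      rintro _ ⟨x, hxs, rfl⟩
      obtain ⟨h1, h2⟩ := hmem x hxs
      exact ⟨⟨c x, h1⟩, by simpa [mem_closedBall, dist_zero_right, Submodule.norm_coe] using h2, rfl⟩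
    exact hKcpt.of_isClosed_subset isClosed_closure
      (closure_minimal hsub hKcpt.isClosed)
  -- f(a n) = e n
  have hfa : ∀ n : ℕ, a n + c (a n) = e n := by
    intro n
    have h0 : ‖a n - a n‖ < 1/2 := by simp
    rw [hceq (a n) n h0, hψ_def]
    simp only [sub_self, norm_zero]
    have : φf 0 = 1 := by rw [hφ_def]; simp
    rw [this, one_smul, ha_def]
    show ((n:ℝ)+1) • e n + (-(n:ℝ)) • e n = e n
    rw [← add_smul]
    norm_num
  -- unboundedness of the preimage
  have hunbd : ¬ IsBounded ((fun x => x + c x) ⁻¹' Metric.closedBall (0 : H) 1) := by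
    intro hbd
    obtain ⟨R, hR⟩ := hbd.subset_closedBall 0
    obtain ⟨n, hn⟩ := exists_nat_gt R
    have hmem : a n ∈ (fun x => x + c x) ⁻¹' Metric.closedBall (0 : H) 1 := by
      simp only [Set.mem_preimage, hfa n, mem_closedBall, dist_zero_right, henorm n, le_refl]
    have := hR hmem
    rw [mem_closedBall, dist_zero_right, hanorm n] at this
    linarith
  have hf_cont : Continuous (fun x : H => x + c x) := continuous_id.add hcont
  have he : Orthonormal ℝ e := by
    rw [orthonormal_iff_ite]
    intro i j
    by_cases h : i = j
    · subst h; simp [real_inner_self_eq_norm_mul_norm, henorm i]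
    · simp [h, heinner h]
  have hbess : ∀ y : H, Tendsto (fun j : ℕ => (inner ℝ y (e j) : ℝ)) atTop (𝓝 0) := by
    intro y
    have h0 := (he.inner_products_summable y).tendsto_atTop_zero
    have h1 : Tendsto (fun j : ℕ => Real.sqrt (‖(inner ℝ (e j) y : ℝ)‖ ^ 2)) atTop (𝓝 0) := by
      have := (Real.continuous_sqrt.tendsto' 0 0 (by simp)).comp h0
      exact this
    have h2 : Tendsto (fun j : ℕ => |(inner ℝ y (e j) : ℝ)|) atTop (𝓝 0) := by
      refine h1.congr fun j => ?_
      rw [Real.norm_eq_abs, sq_abs, Real.sqrt_sq_eq_abs, real_inner_comm]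
    exact squeeze_zero_norm (fun j => le_of_eq (Real.norm_eq_abs _)) h2
  have hproper : IsProperMap (fun x : H => x + c x) := by
    rw [isProperMap_iff_isCompact_preimage]
    refine ⟨hf_cont, fun K hK => ?_⟩
    apply IsSeqCompact.isCompact
    intro x hx
    obtain ⟨y, hyK, σ₀, hσ₀, hconv⟩ := hK.isSeqCompact (x := fun k => x k + c (x k)) hx
    set z : ℕ → H := x ∘ σ₀ with hz_def
    have hfz : Tendsto (fun k => z k + c (z k)) atTop (𝓝 y) := hconv
    suffices hcl : ∃ b : H, ∃ τ : ℕ → ℕ, StrictMono τ ∧ Tendsto (z ∘ τ) atTop (𝓝 b) by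
      obtain ⟨b, τ, hτ, hbt⟩ := hcl
      refine ⟨b, ?_, σ₀ ∘ τ, hσ₀.comp hτ, hbt⟩
      have h1 : Tendsto (fun k => z (τ k) + c (z (τ k))) atTop (𝓝 (b + c b)) :=
        ((hf_cont.tendsto b).comp hbt : _)
      have h2 : Tendsto (fun k => z (τ k) + c (z (τ k))) atTop (𝓝 y) :=
        (hfz.comp hτ.tendsto_atTop : _)
      have hby := tendsto_nhds_unique h1 h2
      simpa [Set.mem_preimage, hby] using hyK
    by_cases hA : ∃ᶠ k in atTop, ∀ n : ℕ, ¬ ‖z k - a n‖ < 1/2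
    · obtain ⟨τ, hτ, hτP⟩ := extraction_of_frequently_atTop hA
      refine ⟨y, τ, hτ, ?_⟩
      have heq : ∀ k, (z ∘ τ) k = z (τ k) + c (z (τ k)) := fun k => by
        rw [hceq0 _ (hτP k), add_zero]; rfl
      exact ((hfz.comp hτ.tendsto_atTop : _) : Tendsto (fun k => z (τ k) + c (z (τ k))) atTop (𝓝 y)).congr
        (fun k => (heq k).symm)
    · have hev : ∀ᶠ k in atTop, ∃ n, ‖z k - a n‖ < 1/2 := by
        rw [Filter.not_frequently] at hA
        refine hA.mono fun k hk => ?_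
        push_neg at hk
        exact hk
      obtain ⟨k₀, hk₀⟩ := eventually_atTop.mp hev
      choose nn hnn using fun k : ℕ => hk₀ (k + k₀) (Nat.le_add_left _ _)
      set wseq : ℕ → H := fun k => z (k + k₀) with hw_def
      have hfw : Tendsto (fun k => wseq k + c (wseq k)) atTop (𝓝 y) :=
        (hfz.comp (tendsto_add_atTop_nat k₀) : _)
      by_cases hB : ∃ m, ∃ᶠ k in atTop, nn k = m
      · obtain ⟨m, hm⟩ := hB
        obtain ⟨τ, hτ, hτm⟩ := extraction_of_frequently_atTop hm
        have hts : ∀ k, φf (wseq (τ k) - a m) ∈ Set.Icc (0:ℝ) 1 :=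
          fun k => ⟨hφ_nonneg _, hφ_le_one _⟩
        obtain ⟨t₀, _, ρ, hρ, htconv⟩ :=
          (isCompact_Icc (a := (0:ℝ)) (b := 1)).isSeqCompact hts
        refine ⟨y - t₀ • ((-(m:ℝ)) • e m), fun k => τ (ρ k) + k₀,
          fun i j hij => by simpa using (hτ (hρ hij)), ?_⟩
        have hform : ∀ k, (z ∘ fun k => τ (ρ k) + k₀) k
            = (wseq (τ (ρ k)) + c (wseq (τ (ρ k))))
              - φf (wseq (τ (ρ k)) - a m) • ((-(m:ℝ)) • e m) := by
          intro k
          have hmem : ‖wseq (τ (ρ k)) - a m‖ < 1/2 := by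
            have := hnn (τ (ρ k)); rwa [hτm (ρ k)] at this
          have hc := hceq (wseq (τ (ρ k))) m hmem
          show wseq (τ (ρ k)) = _
          rw [hc, hψ_def]
          abel
        have hlim : Tendsto (fun k => (wseq (τ (ρ k)) + c (wseq (τ (ρ k))))
              - φf (wseq (τ (ρ k)) - a m) • ((-(m:ℝ)) • e m)) atTop
            (𝓝 (y - t₀ • ((-(m:ℝ)) • e m))) := by
          apply Tendsto.sub
          · exact (hfw.comp ((hτ.comp hρ).tendsto_atTop) : _)
          · exact (htconv : Tendsto (fun k => φf (wseq (τ (ρ k)) - a m)) atTop (𝓝 t₀)).smul_const _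
        exact hlim.congr fun k => (hform k).symm
      · exfalso
        push_neg at hB
        have hB' : ∀ m, ∀ᶠ k in atTop, nn k ≠ m := by
          intro m
          have := hB m
          exact this
        have htop : Tendsto nn atTop atTop := by
          rw [Filter.tendsto_atTop]
          intro N
          have hall : ∀ᶠ k in atTop, ∀ m ∈ Finset.range N, nn k ≠ m :=
            (Finset.range N).eventually_all.mpr fun m _ => hB' m
          refine hall.mono fun k hk => ?_
          by_contra hlt
          push_neg at hlt
          exact hk (nn k) (Finset.mem_range.mpr hlt) rfl
        have hy0 : Tendsto (fun k => (inner ℝ y (e (nn k)) : ℝ)) atTop (𝓝 0) :=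
          (hbess y).comp htop
        have hfy : Tendsto (fun k => ‖(wseq k + c (wseq k)) - y‖) atTop (𝓝 0) := by
          rw [← tendsto_iff_norm_sub_tendsto_zero]
          exact hfw
        have hee : ∀ j, (inner ℝ (e j) (e j) : ℝ) = 1 := by
          intro j
          rw [real_inner_self_eq_norm_mul_norm, henorm j]; norm_num
        have hlow : ∀ k, (1:ℝ)/2 ≤ inner ℝ (wseq k + c (wseq k)) (e (nn k)) := by
          intro k
          have hc := hceq (wseq k) (nn k) (hnn k)
          have h1 : (inner ℝ (wseq k) (e (nn k)) : ℝ)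
              = ((nn k : ℝ) + 1) + inner ℝ (wseq k - a (nn k)) (e (nn k)) := by
            have ha' : (inner ℝ (a (nn k)) (e (nn k)) : ℝ) = (nn k : ℝ) + 1 := by
              rw [ha_def]
              show (inner ℝ (((nn k : ℝ) + 1) • e (nn k)) (e (nn k)) : ℝ) = _
              rw [real_inner_smul_left, hee]; ring
            rw [inner_sub_left, ha']
            ring
          have h2 : |(inner ℝ (wseq k - a (nn k)) (e (nn k)) : ℝ)| ≤ 1/2 := by
            calc |(inner ℝ (wseq k - a (nn k)) (e (nn k)) : ℝ)|
                ≤ ‖wseq k - a (nn k)‖ * ‖e (nn k)‖ := abs_real_inner_le_norm _ _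
              _ ≤ 1/2 := by rw [henorm]; simpa using (hnn k).le
          have h3 : (inner ℝ (c (wseq k)) (e (nn k)) : ℝ)
              = φf (wseq k - a (nn k)) * (-(nn k : ℝ)) := by
            rw [hc, hψ_def]
            show (inner ℝ (φf (wseq k - a (nn k)) • ((-(nn k : ℝ)) • e (nn k))) (e (nn k)) : ℝ) = _
            rw [real_inner_smul_left, real_inner_smul_left, hee]; ring
          have ht1 : φf (wseq k - a (nn k)) ≤ 1 := hφ_le_one _
          have ht0 : 0 ≤ φf (wseq k - a (nn k)) := hφ_nonneg _
          rw [inner_add_left, h1, h3]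
          have habs := abs_le.mp h2
          have hprod : 0 ≤ (nn k : ℝ) * (1 - φf (wseq k - a (nn k))) :=
            mul_nonneg (Nat.cast_nonneg _) (by linarith)
          linarith [hprod, habs.1, habs.2]
        have hup : Tendsto (fun k => (inner ℝ (wseq k + c (wseq k)) (e (nn k)) : ℝ)) atTop (𝓝 0) := by
          have h4 : Tendsto (fun k => (inner ℝ ((wseq k + c (wseq k)) - y) (e (nn k)) : ℝ)) atTop (𝓝 0) := by
            refine squeeze_zero_norm (fun k => ?_) hfy
            calc ‖(inner ℝ ((wseq k + c (wseq k)) - y) (e (nn k)) : ℝ)‖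
                = |(inner ℝ ((wseq k + c (wseq k)) - y) (e (nn k)) : ℝ)| := Real.norm_eq_abs _
              _ ≤ ‖(wseq k + c (wseq k)) - y‖ * ‖e (nn k)‖ := abs_real_inner_le_norm _ _
              _ = ‖(wseq k + c (wseq k)) - y‖ := by rw [henorm, mul_one]
          have := h4.add hy0
          rw [add_zero] at this
          refine this.congr fun k => ?_
          rw [inner_sub_left]
          ring
        have hcontra := ge_of_tendsto hup (Eventually.of_forall hlow)
        linarith
  exact ⟨c, hcont, hcpt, hproper, hunbd⟩
end

section
/- Let l : H' → H be a continuous linear Fredholm map between Hilbert spaces, c : H' → H compact with f = l + c satisfying that preimages of bounded sets are bounded. Then there exists a finite-dimensional linear subspace V ⊆ H such that V together with the image of l spans H, i.e. H = im(l) + V, and the restriction of f to l⁻¹(W) misses the unit sphere of W^⊥ for every finite-dimensional subspace W ⊇ V. -/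
open Bornology Metric

/-- For a compact perturbation `f = l + c` of a continuous linear Fredholm map
between Hilbert spaces with bounded preimages of bounded sets, there is a
finite-dimensional subspace `V ⊆ H` spanning `H` together with the image of `l`,
such that for every finite-dimensional `W ⊇ V` the image of `l⁻¹(W)` under `f`
misses the unit sphere of `W^⊥`. -/
theorem exists_finrank_subspace_sphere_avoidance
    {H' H : Type*}
    [NormedAddCommGroup H'] [InnerProductSpace ℝ H'] [CompleteSpace H']
    [NormedAddCommGroup H] [InnerProductSpace ℝ H] [CompleteSpace H]
    (l : H' →L[ℝ] H)
    (hker : FiniteDimensional ℝ (LinearMap.ker (l : H' →ₗ[ℝ] H)))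
    (hrange : IsClosed (LinearMap.range (l : H' →ₗ[ℝ] H) : Set H))
    (hcoker : FiniteDimensional ℝ (H ⧸ LinearMap.range (l : H' →ₗ[ℝ] H)))
    (c : H' → H) (hc : Continuous c)
    (hcpt : ∀ s : Set H', IsBounded s → IsCompact (closure (c '' s)))
    (hbdd : ∀ s : Set H, IsBounded s → IsBounded ((fun x => l x + c x) ⁻¹' s)) :
    ∃ V : Submodule ℝ H, FiniteDimensional ℝ V ∧
      LinearMap.range (l : H' →ₗ[ℝ] H) ⊔ V = ⊤ ∧
      ∀ W : Submodule ℝ H, FiniteDimensional ℝ W → V ≤ W →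
        ∀ x : H', l x ∈ W → ¬(l x + c x ∈ Wᗮ ∧ ‖l x + c x‖ = 1) := by
  by_contra hcon
  push_neg at hcon
  classical
  set f : H' → H := fun x => l x + c x with hf
  haveI hrc : CompleteSpace (LinearMap.range (l : H' →ₗ[ℝ] H)) := hrange.completeSpace_coe
  have hV0top : LinearMap.range (l : H' →ₗ[ℝ] H) ⊔ (LinearMap.range (l : H' →ₗ[ℝ] H))ᗮ = ⊤ :=
    Submodule.sup_orthogonal_of_hasOrthogonalProjection
  haveI hV0fd : FiniteDimensional ℝ ((LinearMap.range (l : H' →ₗ[ℝ] H))ᗮ) := by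
    have e : (H ⧸ LinearMap.range (l : H' →ₗ[ℝ] H)) ≃ₗ[ℝ] ((LinearMap.range (l : H' →ₗ[ℝ] H))ᗮ) :=
      Submodule.quotientEquivOfIsCompl _ _
        (Submodule.isCompl_orthogonal_of_hasOrthogonalProjection (K := LinearMap.range (l : H' →ₗ[ℝ] H)))
    exact Module.Finite.equiv e
  -- key step lemma
  have key : ∀ V : Submodule ℝ H, FiniteDimensional ℝ V → LinearMap.range (l : H' →ₗ[ℝ] H) ⊔ V = ⊤ →
      ∃ (V' : Submodule ℝ H) (x : H'), FiniteDimensional ℝ V' ∧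
        LinearMap.range (l : H' →ₗ[ℝ] H) ⊔ V' = ⊤ ∧ V ≤ V' ∧ l x ∈ V' ∧ f x ∈ V' ∧
        f x ∈ Vᗮ ∧ inner ℝ (f x) (l x) = (0 : ℝ) ∧ ‖f x‖ = 1 := by
    intro V hVfd hVtop
    obtain ⟨W, hWfd, hVW, x, hlx, hWo, hnorm⟩ := hcon V hVfd hVtop
    refine ⟨W ⊔ (ℝ ∙ f x), x, ?_, ?_, ?_, ?_, ?_, ?_, ?_, hnorm⟩
    · haveI := hWfd; infer_instance
    · rw [eq_top_iff, ← hVtop]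
      exact sup_le_sup le_rfl (hVW.trans le_sup_left)
    · exact hVW.trans le_sup_left
    · exact Submodule.mem_sup_left hlx
    · exact Submodule.mem_sup_right (Submodule.mem_span_singleton_self _)
    · exact Submodule.orthogonal_le hVW hWo
    · exact Submodule.inner_left_of_mem_orthogonal hlx hWo
  -- build the sequence by dependent choice
  let T := {p : Submodule ℝ H × H' // FiniteDimensional ℝ p.1 ∧ LinearMap.range (l : H' →ₗ[ℝ] H) ⊔ p.1 = ⊤}
  have step : ∀ t : T, ∃ t' : T, t.1.1 ≤ t'.1.1 ∧ l t'.1.2 ∈ t'.1.1 ∧ f t'.1.2 ∈ t'.1.1 ∧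
      f t'.1.2 ∈ (t.1.1)ᗮ ∧ inner ℝ (f t'.1.2) (l t'.1.2) = (0 : ℝ) ∧ ‖f t'.1.2‖ = 1 := by
    rintro ⟨⟨V, x₀⟩, hfd, htop⟩
    obtain ⟨V', x, h1, h2, h3, h4, h5, h6, h7, h8⟩ := key V hfd htop
    exact ⟨⟨(V', x), h1, h2⟩, h3, h4, h5, h6, h7, h8⟩
  choose g hg1 hg2 hg3 hg4 hg5 hg6 using step
  let u : ℕ → T := fun n => g^[n] ⟨((LinearMap.range (l : H' →ₗ[ℝ] H))ᗮ, 0), hV0fd, hV0top⟩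
  have hu : ∀ n, u (n + 1) = g (u n) := fun n => Function.iterate_succ_apply' _ _ _
  set V : ℕ → Submodule ℝ H := fun n => (u n).1.1 with hV
  set x : ℕ → H' := fun n => (u (n + 1)).1.2 with hx
  have hmono : Monotone V := by
    apply monotone_nat_of_le_succ
    intro n
    rw [hV]; simp only; rw [hu n]; exact hg1 (u n)
  have hlmem : ∀ n, l (x n) ∈ V (n + 1) := by
    intro n; rw [hV, hx]; simp only; rw [hu n]; exact hg2 (u n)
  have hfmem : ∀ n, f (x n) ∈ V (n + 1) := by
    intro n; rw [hV, hx]; simp only; rw [hu n]; exact hg3 (u n)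
  have hforth : ∀ n, f (x n) ∈ (V n)ᗮ := by
    intro n; rw [hV, hx]; simp only; rw [hu n]; exact hg4 (u n)
  have hinner0 : ∀ n, inner ℝ (f (x n)) (l (x n)) = (0 : ℝ) := by
    intro n; rw [hx]; simp only; rw [hu n]; exact hg5 (u n)
  have hnorm1 : ∀ n, ‖f (x n)‖ = 1 := by
    intro n; rw [hx]; simp only; rw [hu n]; exact hg6 (u n)
  -- the separation estimate
  have hsep : ∀ m n : ℕ, n < m → (1 : ℝ) ≤ ‖c (x m) - c (x n)‖ := by
    intro m n hnm
    have h1 : inner ℝ (f (x m)) (f (x n)) = (0 : ℝ) := by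
      have := (Submodule.mem_orthogonal _ _).mp (hforth m) _ ((hmono (Nat.succ_le_of_lt hnm)) (hfmem n))
      exact (inner_eq_zero_symm).mp this
    have h2 : inner ℝ (f (x m)) (l (x n)) = (0 : ℝ) := by
      have := (Submodule.mem_orthogonal _ _).mp (hforth m) _ ((hmono (Nat.succ_le_of_lt hnm)) (hlmem n))
      exact (inner_eq_zero_symm).mp this
    have h3 : inner ℝ (f (x m)) (c (x m) - c (x n)) = (1 : ℝ) := by
      have hcm : c (x m) = f (x m) - l (x m) := by simp [hf]
      have hcn : c (x n) = f (x n) - l (x n) := by simp [hf]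
      rw [hcm, hcn]
      have hsq : inner ℝ (f (x m)) (f (x m)) = (1 : ℝ) := by
        rw [real_inner_self_eq_norm_sq, hnorm1 m]; norm_num
      simp [inner_sub_right, hsq, hinner0 m, h1, h2, hnorm1 m]
    calc (1 : ℝ) = inner ℝ (f (x m)) (c (x m) - c (x n)) := h3.symm
      _ ≤ ‖f (x m)‖ * ‖c (x m) - c (x n)‖ := real_inner_le_norm _ _
      _ = ‖c (x m) - c (x n)‖ := by rw [hnorm1 m, one_mul]
  -- compactness contradiction
  have hB : IsBounded (f ⁻¹' (closedBall (0 : H) 1)) := hbdd _ isBounded_closedBall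
  have hK : IsCompact (closure (c '' (f ⁻¹' (closedBall (0 : H) 1)))) := hcpt _ hB
  have hmem : ∀ n, c (x n) ∈ closure (c '' (f ⁻¹' (closedBall (0 : H) 1))) := by
    intro n
    apply subset_closure
    exact ⟨x n, by simp [mem_closedBall, dist_eq_norm, hnorm1 n], rfl⟩
  obtain ⟨y, -, φ, hφ, hlim⟩ := hK.tendsto_subseq hmem
  have := Metric.tendsto_atTop.mp hlim (1/2) (by norm_num)
  obtain ⟨N, hN⟩ := this
  have d1 := hN N le_rfl
  have d2 := hN (N + 1) (Nat.le_succ N)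
  have hlt : dist (c (x (φ (N + 1)))) (c (x (φ N))) < 1 := by
    calc dist (c (x (φ (N + 1)))) (c (x (φ N)))
        ≤ dist (c (x (φ (N + 1)))) y + dist y (c (x (φ N))) := dist_triangle _ _ _
      _ < 1/2 + 1/2 := by rw [dist_comm y]; exact add_lt_add d2 d1
      _ = 1 := by norm_num
  have hge : (1 : ℝ) ≤ dist (c (x (φ (N + 1)))) (c (x (φ N))) := by
    rw [dist_eq_norm]
    exact hsep _ _ (hφ (Nat.lt_succ_self N))
  linarith
end

section
/- In the setting of the previous lemma, the subspaces V ⊆ H satisfying H = im(l) + V and the sphere-avoidance property are cofinal in the directed system of finite-dimensional linear subspaces of a separable Hilbert space H: every finite-dimensional subspace of H is contained in such a V. -/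
open Bornology Metric

local notation "⟪" x ", " y "⟫" => @inner ℝ _ _ x y

/-- In a separable Hilbert space `H`, the finite-dimensional subspaces `V`
satisfying `H = im(l) + V` and the sphere-avoidance property are cofinal in the
directed system of finite-dimensional subspaces of `H`. -/
theorem sphere_avoidance_subspaces_cofinal
    {H' H : Type*}
    [NormedAddCommGroup H'] [InnerProductSpace ℝ H'] [CompleteSpace H']
    [NormedAddCommGroup H] [InnerProductSpace ℝ H] [CompleteSpace H]
    [TopologicalSpace.SeparableSpace H]
    (l : H' →L[ℝ] H)
    (hker : FiniteDimensional ℝ (LinearMap.ker (l : H' →ₗ[ℝ] H)))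
    (hrange : IsClosed (LinearMap.range (l : H' →ₗ[ℝ] H) : Set H))
    (hcoker : FiniteDimensional ℝ (H ⧸ LinearMap.range (l : H' →ₗ[ℝ] H)))
    (c : H' → H) (hc : Continuous c)
    (hcpt : ∀ s : Set H', IsBounded s → IsCompact (closure (c '' s)))
    (hbdd : ∀ s : Set H, IsBounded s → IsBounded ((fun x => l x + c x) ⁻¹' s)) :
    ∀ U : Submodule ℝ H, FiniteDimensional ℝ U →
      ∃ V : Submodule ℝ H, U ≤ V ∧ FiniteDimensional ℝ V ∧
        LinearMap.range (l : H' →ₗ[ℝ] H) ⊔ V = ⊤ ∧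
        ∀ W : Submodule ℝ H, FiniteDimensional ℝ W → V ≤ W →
          ∀ x : H', l x ∈ W → ¬(l x + c x ∈ Wᗮ ∧ ‖l x + c x‖ = 1) := by
  intro U hU
  -- the bounded preimage of the closed unit ball and the compact set K
  have hb : IsBounded ((fun x => l x + c x) ⁻¹' closedBall (0 : H) 1) :=
    hbdd _ isBounded_closedBall
  set K : Set H := closure (c '' ((fun x => l x + c x) ⁻¹' closedBall (0 : H) 1)) with hKdef
  have hK : IsCompact K := hcpt _ hb
  obtain ⟨t, htK, htfin, htcov⟩ :=
    finite_cover_balls_of_compact hK (by norm_num : (0 : ℝ) < 1 / 2)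
  -- range l is a complete subspace
  haveI : CompleteSpace (LinearMap.range (l : H' →ₗ[ℝ] H) : Submodule ℝ H) := hrange.completeSpace_coe
  -- (range l)ᗮ is finite dimensional
  haveI hfdo : FiniteDimensional ℝ ((LinearMap.range (l : H' →ₗ[ℝ] H))ᗮ : Submodule ℝ H) := by
    let φ : ((LinearMap.range (l : H' →ₗ[ℝ] H))ᗮ : Submodule ℝ H) →ₗ[ℝ] (H ⧸ LinearMap.range (l : H' →ₗ[ℝ] H)) :=
      (LinearMap.range (l : H' →ₗ[ℝ] H)).mkQ.comp (LinearMap.range (l : H' →ₗ[ℝ] H))ᗮ.subtype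
    have hinj : Function.Injective φ := by
      rw [← LinearMap.ker_eq_bot]
      rw [LinearMap.ker_comp, Submodule.ker_mkQ, Submodule.eq_bot_iff]
      rintro ⟨v, hv⟩ hvm
      have hv1 : v ∈ LinearMap.range (l : H' →ₗ[ℝ] H) := hvm
      have h0 : v = 0 :=
        Submodule.disjoint_def.1 (Submodule.orthogonal_disjoint _) v hv1 hv
      exact Subtype.ext h0
    exact FiniteDimensional.of_injective φ hinj
  -- the candidate subspace
  haveI htfd : FiniteDimensional ℝ (Submodule.span ℝ t) :=
    FiniteDimensional.span_of_finite ℝ htfin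
  refine ⟨U ⊔ (LinearMap.range (l : H' →ₗ[ℝ] H))ᗮ ⊔ Submodule.span ℝ t,
    le_sup_of_le_left le_sup_left, inferInstance, ?_, ?_⟩
  · rw [eq_top_iff]
    have h1 : LinearMap.range (l : H' →ₗ[ℝ] H) ⊔ (LinearMap.range (l : H' →ₗ[ℝ] H))ᗮ = ⊤ :=
      Submodule.sup_orthogonal_of_hasOrthogonalProjection
    calc (⊤ : Submodule ℝ H) = LinearMap.range (l : H' →ₗ[ℝ] H) ⊔ (LinearMap.range (l : H' →ₗ[ℝ] H))ᗮ := h1.symm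
      _ ≤ LinearMap.range (l : H' →ₗ[ℝ] H) ⊔ (U ⊔ (LinearMap.range (l : H' →ₗ[ℝ] H))ᗮ ⊔ Submodule.span ℝ t) := by
          gcongr
          exact le_sup_of_le_left le_sup_right
  · rintro W hW hVW x hlx ⟨hfxW, hnorm⟩
    -- c x belongs to K
    have hx : x ∈ (fun x => l x + c x) ⁻¹' closedBall (0 : H) 1 := by
      simp [mem_closedBall, dist_eq_norm, hnorm]
    have hcxK : c x ∈ K := subset_closure ⟨x, hx, rfl⟩
    obtain ⟨y, hyt, hy⟩ := Set.mem_iUnion₂.1 (htcov hcxK)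
    have hyW : y ∈ W := hVW (Submodule.mem_sup_right (Submodule.subset_span hyt))
    -- inner product computation
    have horth : ∀ u ∈ W, ⟪u, l x + c x⟫ = 0 :=
      (Submodule.mem_orthogonal W _).1 hfxW
    have key : (1 : ℝ) = ⟪c x - y, l x + c x⟫ := by
      have h1 : ⟪l x + c x, l x + c x⟫ = 1 := by
        rw [real_inner_self_eq_norm_mul_norm, hnorm]; ring
      have h2 : (l x + c x : H) = l x + y + (c x - y) := by abel
      calc (1 : ℝ) = ⟪l x + c x, l x + c x⟫ := h1.symm
        _ = ⟪l x + y + (c x - y), l x + c x⟫ := by rw [← h2]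
        _ = ⟪l x, l x + c x⟫ + ⟪y, l x + c x⟫ + ⟪c x - y, l x + c x⟫ := by
            rw [inner_add_left, inner_add_left]
        _ = ⟪c x - y, l x + c x⟫ := by
            rw [horth _ hlx, horth _ hyW]; ring
    have hle : ⟪c x - y, l x + c x⟫ ≤ ‖c x - y‖ * ‖l x + c x‖ := real_inner_le_norm _ _
    have hlt : ‖c x - y‖ < 1 / 2 := by
      have := mem_ball.1 hy
      rwa [dist_eq_norm] at this
    rw [hnorm, mul_one] at hle
    linarith [key, hle, hlt]
end
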